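/- The predictive risk of the marginal regression estimator is R_V(β̂_m) = d/n + η² (d+1)/n. -/

import Mathlib

open MeasureTheory ProbabilityTheory Matrix Filter
open scoped ENNReal NNReal Topology

noncomputable section
open scoped Classical

namespace DickerAux
open Real
set_option linter.unusedSectionVars false

lemma integral_neg_comp (F : ℝ → ℝ) : ∫ x, F (-x) = ∫ x, F x := by
  have h := (Homeomorph.neg ℝ).measurableEmbedding.integral_map (μ := (volume : Measure ℝ)) F
  have h2 : Measure.map (⇑(Homeomorph.neg ℝ)) (volume : Measure ℝ) = volume := by
    have := Measure.map_neg_eq_self (volume : Measure ℝ)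
    convert this using 2
    all_goals rfl
  rw [h2] at h
  simpa using h.symm

lemma integral_odd_pow_exp (b : ℝ) (k : ℕ) (hk : Odd k) :
    ∫ x : ℝ, x ^ k * Real.exp (-b * x ^ 2) = 0 := by
  set F : ℝ → ℝ := fun x => x ^ k * Real.exp (-b * x ^ 2) with hF
  have h1 : ∀ x, F (-x) = - F x := by
    intro x
    simp only [F, hk.neg_pow, neg_sq, neg_mul]
  have h2 : ∫ x, F x = - ∫ x, F x := by
    conv_lhs => rw [← integral_neg_comp F]
    simp only [h1, integral_neg]
  linarith [h2]

lemma integral_even_pow_exp {b : ℝ} (hb : 0 < b) (k : ℕ) (hk : Even k) :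
    ∫ x : ℝ, x ^ k * Real.exp (-b * x ^ 2) =
      b ^ (-((k : ℝ) + 1) / 2) * Real.Gamma (((k : ℝ) + 1) / 2) := by
  have habs : ∀ x : ℝ, (fun y => y ^ k * Real.exp (-b * y ^ 2)) |x|
      = x ^ k * Real.exp (-b * x ^ 2) := by
    intro x
    simp only [hk.pow_abs, sq_abs]
  calc ∫ x : ℝ, x ^ k * Real.exp (-b * x ^ 2)
      = ∫ x : ℝ, (fun y => y ^ k * Real.exp (-b * y ^ 2)) |x| := by
        simp_rw [habs]
    _ = 2 * ∫ x in Set.Ioi (0:ℝ), x ^ k * Real.exp (-b * x ^ 2) :=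
        integral_comp_abs (f := fun y => y ^ k * Real.exp (-b * y ^ 2))
    _ = 2 * ∫ x in Set.Ioi (0:ℝ), x ^ (k : ℝ) * Real.exp (-b * x ^ (2:ℝ)) := by
        congr 1
        refine setIntegral_congr_fun measurableSet_Ioi (fun x hx => ?_)
        rw [Real.rpow_natCast]
        norm_num [Real.rpow_two]
    _ = 2 * (b ^ (-((k:ℝ) + 1) / 2) * (1 / 2) * Real.Gamma (((k:ℝ) + 1) / 2)) := by
        rw [integral_rpow_mul_exp_neg_mul_rpow (by norm_num) (by linarith [Nat.cast_nonneg (α := ℝ) k] : (-1:ℝ) < (k:ℝ)) hb]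
    _ = b ^ (-((k : ℝ) + 1) / 2) * Real.Gamma (((k : ℝ) + 1) / 2) := by ring


lemma integral_gaussianReal_eq (t : ℝ≥0) (ht : t ≠ 0) (g : ℝ → ℝ) :
    ∫ x, g x ∂(gaussianReal 0 t) = ∫ x, g x * gaussianPDFReal 0 t x := by
  rw [gaussianReal_of_var_ne_zero _ ht]
  have hpdf : gaussianPDF 0 t = fun x => ((gaussianPDFReal 0 t x).toNNReal : ℝ≥0∞) := by
    funext x
    rw [gaussianPDF, ENNReal.ofReal]
  rw [hpdf, integral_withDensity_eq_integral_smul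
    ((measurable_gaussianPDFReal 0 t).real_toNNReal) g]
  congr 1
  funext x
  rw [NNReal.smul_def, smul_eq_mul, Real.coe_toNNReal _ (gaussianPDFReal_nonneg 0 t x), mul_comm]

lemma integrable_pow_gaussianReal (t : ℝ≥0) (k : ℕ) :
    Integrable (fun x => x ^ k) (gaussianReal 0 t) := by
  by_cases ht : t = 0
  · subst ht
    rw [gaussianReal_zero_var]
    refine ⟨(measurable_id.pow_const k).aestronglyMeasurable, ?_⟩
    rw [hasFiniteIntegral_def, lintegral_dirac]
    exact ENNReal.coe_lt_top
  · rw [gaussianReal_of_var_ne_zero _ ht]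
    rw [integrable_withDensity_iff (measurable_gaussianPDF 0 t)
      (Eventually.of_forall fun x => ENNReal.ofReal_lt_top)]
    have hpdf : ∀ x : ℝ, (gaussianPDF 0 t x).toReal = gaussianPDFReal 0 t x := fun x => by
      rw [gaussianPDF, ENNReal.toReal_ofReal (gaussianPDFReal_nonneg 0 t x)]
    simp_rw [hpdf]
    have ht' : (0:ℝ) < (t:ℝ) := lt_of_le_of_ne (t.coe_nonneg) (by exact_mod_cast (Ne.symm ht))
    have harg : ∀ x : ℝ, -(x - 0) ^ 2 / (2 * (t:ℝ)) = -(2 * (t:ℝ))⁻¹ * x ^ 2 := fun x => by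
      rw [sub_zero]; field_simp
    have : (fun x : ℝ => x ^ k * gaussianPDFReal 0 t x) =
        fun x : ℝ => (√(2 * π * t))⁻¹ * (x ^ (k:ℝ) * Real.exp (-(2 * (t:ℝ))⁻¹ * x ^ 2)) := by
      funext x
      rw [gaussianPDFReal, Real.rpow_natCast, harg]
      ring
    rw [this]
    exact (integrable_rpow_mul_exp_neg_mul_sq (by positivity)
      (by linarith [Nat.cast_nonneg (α := ℝ) k] : (-1:ℝ) < (k:ℝ))).const_mul _


lemma rpow_facts {b : ℝ} (hb : 0 < b) :
    (b⁻¹) ^ (-(3:ℝ)/2) = b * √b ∧ (b⁻¹) ^ (-(5:ℝ)/2) = b ^ 2 * √b := by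
  have h1 : ∀ y : ℝ, (b⁻¹) ^ (-y) = b ^ y := by
    intro y
    rw [Real.inv_rpow hb.le, ← Real.rpow_neg hb.le, neg_neg]
  constructor
  · rw [show (-(3:ℝ)/2) = -((3:ℝ)/2) by norm_num, h1,
      show (3:ℝ)/2 = 1 + 1/2 by norm_num, Real.rpow_add hb, Real.rpow_one,
      ← Real.sqrt_eq_rpow]
  · rw [show (-(5:ℝ)/2) = -((5:ℝ)/2) by norm_num, h1,
      show (5:ℝ)/2 = 2 + 1/2 by norm_num, Real.rpow_add hb,
      ← Real.sqrt_eq_rpow, show (2:ℝ) = ((2:ℕ):ℝ) by norm_num, Real.rpow_natCast]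

lemma Gamma_three_half : Real.Gamma (3/2) = √π / 2 := by
  rw [show (3:ℝ)/2 = 1/2 + 1 by norm_num, Real.Gamma_add_one (by norm_num),
    Real.Gamma_one_half_eq]
  ring

lemma Gamma_five_half : Real.Gamma (5/2) = 3/4 * √π := by
  rw [show (5:ℝ)/2 = 3/2 + 1 by norm_num, Real.Gamma_add_one (by norm_num), Gamma_three_half]
  ring


lemma integral_pow_gaussianReal (t : ℝ≥0) (ht : t ≠ 0) (k : ℕ) :
    ∫ x, x ^ k ∂(gaussianReal 0 t) =
      (√(2 * π * t))⁻¹ * ∫ x, x ^ k * Real.exp (-(2 * (t:ℝ))⁻¹ * x ^ 2) := by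
  rw [integral_gaussianReal_eq t ht]
  have harg : ∀ x : ℝ, -(x - 0) ^ 2 / (2 * (t:ℝ)) = -(2 * (t:ℝ))⁻¹ * x ^ 2 := fun x => by
    rw [sub_zero]; field_simp
  simp_rw [gaussianPDFReal, harg, ← integral_const_mul]
  congr 1; funext x; ring

lemma tpos {t : ℝ≥0} (ht : t ≠ 0) : (0:ℝ) < (t:ℝ) :=
  lt_of_le_of_ne t.coe_nonneg (by exact_mod_cast (Ne.symm ht))

lemma sqrt_2pit {t : ℝ≥0} : √(2 * π * (t:ℝ)) = √π * √(2 * (t:ℝ)) := by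
  rw [show 2 * π * (t:ℝ) = π * (2 * (t:ℝ)) by ring, Real.sqrt_mul pi_nonneg]

lemma mom1 (t : ℝ≥0) : ∫ x, x ∂(gaussianReal 0 t) = 0 := by
  by_cases ht : t = 0
  · subst ht; rw [gaussianReal_zero_var, integral_dirac]
  · have h := integral_pow_gaussianReal t ht 1
    simp only [pow_one] at h
    have hz := integral_odd_pow_exp ((2 * (t:ℝ))⁻¹) 1 (by decide)
    simp only [pow_one] at hz
    rw [h, hz, mul_zero]

lemma mom2 (t : ℝ≥0) : ∫ x, x ^ 2 ∂(gaussianReal 0 t) = t := by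
  by_cases ht : t = 0
  · subst ht; rw [gaussianReal_zero_var, integral_dirac]; simp
  · have ht' := tpos ht
    have hb : (0:ℝ) < (2 * (t:ℝ))⁻¹ := by positivity
    rw [integral_pow_gaussianReal t ht 2, integral_even_pow_exp hb 2 (by decide)]
    have h1 : (-(((2:ℕ):ℝ) + 1) / 2) = -(3:ℝ)/2 := by norm_num
    have h2 : ((((2:ℕ):ℝ)) + 1) / 2 = (3:ℝ)/2 := by norm_num
    rw [h1, h2, (rpow_facts (by positivity : (0:ℝ) < 2 * (t:ℝ))).1,
      Gamma_three_half, sqrt_2pit]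
    have hs : (0:ℝ) < √(2 * (t:ℝ)) := Real.sqrt_pos.mpr (by positivity)
    have hp : (0:ℝ) < √π := Real.sqrt_pos.mpr pi_pos
    field_simp

lemma mom4 (t : ℝ≥0) : ∫ x, x ^ 4 ∂(gaussianReal 0 t) = 3 * (t:ℝ) ^ 2 := by
  by_cases ht : t = 0
  · subst ht; rw [gaussianReal_zero_var, integral_dirac]; simp
  · have ht' := tpos ht
    have hb : (0:ℝ) < (2 * (t:ℝ))⁻¹ := by positivity
    rw [integral_pow_gaussianReal t ht 4, integral_even_pow_exp hb 4 (by decide)]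
    have h1 : (-(((4:ℕ):ℝ) + 1) / 2) = -(5:ℝ)/2 := by norm_num
    have h2 : ((((4:ℕ):ℝ)) + 1) / 2 = (5:ℝ)/2 := by norm_num
    rw [h1, h2, (rpow_facts (by positivity : (0:ℝ) < 2 * (t:ℝ))).2,
      Gamma_five_half, sqrt_2pit]
    have hs : (0:ℝ) < √(2 * (t:ℝ)) := Real.sqrt_pos.mpr (by positivity)
    have hp : (0:ℝ) < √π := Real.sqrt_pos.mpr pi_pos
    field_simp
    ring


section PiHelpers
variable {ι : Type*} [Fintype ι] [DecidableEq ι] {E : Type*} [MeasurableSpace E]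
  (ν : Measure E) [IsProbabilityMeasure ν]

lemma prod_eq_pair {M : Type*} [CommMonoid M] {i j : ι} (hij : i ≠ j) (f : ι → M)
    (h : ∀ a, a ≠ i → a ≠ j → f a = 1) : ∏ a, f a = f i * f j := by
  rw [← Finset.prod_pair hij]
  refine (Finset.prod_subset (Finset.subset_univ _) (fun a _ ha => ?_)).symm
  simp only [Finset.mem_insert, Finset.mem_singleton, not_or] at ha
  exact h a ha.1 ha.2

lemma prod_eq_triple {M : Type*} [CommMonoid M] {i j k : ι} (hij : i ≠ j) (hik : i ≠ k)
    (hjk : j ≠ k) (f : ι → M) (h : ∀ a, a ≠ i → a ≠ j → a ≠ k → f a = 1) :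
    ∏ a, f a = f i * (f j * f k) := by
  have hi : i ∉ ({j, k} : Finset ι) := by simp [hij, hik]
  rw [← Finset.prod_pair hjk, ← Finset.prod_insert hi]
  refine (Finset.prod_subset (Finset.subset_univ _) (fun a _ ha => ?_)).symm
  simp only [Finset.mem_insert, Finset.mem_singleton, not_or] at ha
  exact h a ha.1 ha.2.1 ha.2.2

lemma pi_integrable_prod (F : ι → E → ℝ) (hF : ∀ a, Integrable (F a) ν) :
    Integrable (fun x : ι → E => ∏ a, F a (x a)) (Measure.pi fun _ => ν) := by
  letI : MeasureSpace E := ⟨ν⟩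
  haveI : SigmaFinite (volume : Measure E) := inferInstanceAs (SigmaFinite ν)
  exact Integrable.fintype_prod (f := F) hF

lemma pi_integral_prod (F : ι → E → ℝ) :
    ∫ x : ι → E, ∏ a, F a (x a) ∂(Measure.pi fun _ => ν) = ∏ a, ∫ y, F a y ∂ν := by
  letI : MeasureSpace E := ⟨ν⟩
  haveI : SigmaFinite (volume : Measure E) := inferInstanceAs (SigmaFinite ν)
  exact integral_fintype_prod_eq_prod F (μ := fun _ => ν)

lemma pi_integrable_eval (i : ι) {f : E → ℝ} (hf : Integrable f ν) :
    Integrable (fun x : ι → E => f (x i)) (Measure.pi fun _ => ν) := by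
  have h := pi_integrable_prod ν (fun a y => if a = i then f y else 1)
    (fun a => by by_cases h : a = i <;> simp [h, hf])
  simpa [Finset.prod_ite_eq'] using h

lemma pi_integral_eval (i : ι) (f : E → ℝ) :
    ∫ x : ι → E, f (x i) ∂(Measure.pi fun _ => ν) = ∫ y, f y ∂ν := by
  have h := pi_integral_prod ν (fun a y => if a = i then f y else 1)
  have hr : ∀ a : ι, (∫ y, (if a = i then f y else 1) ∂ν) = if a = i then ∫ y, f y ∂ν else 1 :=
    fun a => by split <;> simp
  simp only [hr, Finset.prod_ite_eq', Finset.mem_univ, if_true] at h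
  exact h

lemma pi_integrable_eval₂ {i j : ι} (hij : i ≠ j) {f g : E → ℝ}
    (hf : Integrable f ν) (hg : Integrable g ν) :
    Integrable (fun x : ι → E => f (x i) * g (x j)) (Measure.pi fun _ => ν) := by
  have h := pi_integrable_prod ν (fun a y => if a = i then f y else if a = j then g y else 1)
    (fun a => by
      by_cases h1 : a = i <;> by_cases h2 : a = j <;>
        simp [h1, h2, hij, hij.symm, hf, hg])
  have he : ∀ x : ι → E,
      (∏ a, if a = i then f (x a) else if a = j then g (x a) else 1) = f (x i) * g (x j) := by
    intro x
    rw [prod_eq_pair hij _ (fun a h1 h2 => by simp [h1, h2])]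
    simp [hij, hij.symm]
  simpa [he] using h

lemma pi_integral_eval₂ {i j : ι} (hij : i ≠ j) (f g : E → ℝ) :
    ∫ x : ι → E, f (x i) * g (x j) ∂(Measure.pi fun _ => ν) =
      (∫ y, f y ∂ν) * ∫ y, g y ∂ν := by
  have h := pi_integral_prod ν (fun a y => if a = i then f y else if a = j then g y else 1)
  have he : ∀ x : ι → E,
      (∏ a, if a = i then f (x a) else if a = j then g (x a) else 1) = f (x i) * g (x j) := by
    intro x
    rw [prod_eq_pair hij _ (fun a h1 h2 => by simp [h1, h2])]
    simp [hij, hij.symm]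
  have hr : (∏ a, ∫ y, (if a = i then f y else if a = j then g y else 1) ∂ν) =
      (∫ y, f y ∂ν) * ∫ y, g y ∂ν := by
    rw [prod_eq_pair hij _ (fun a h1 h2 => by simp [h1, h2, integral_const])]
    simp [hij, hij.symm]
  simp only [he] at h
  rw [h, hr]

lemma pi_integrable_eval₃ {i j k : ι} (hij : i ≠ j) (hik : i ≠ k) (hjk : j ≠ k)
    {f g h : E → ℝ} (hf : Integrable f ν) (hg : Integrable g ν) (hh : Integrable h ν) :
    Integrable (fun x : ι → E => f (x i) * (g (x j) * h (x k))) (Measure.pi fun _ => ν) := by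
  have h0 := pi_integrable_prod ν
    (fun a y => if a = i then f y else if a = j then g y else if a = k then h y else 1)
    (fun a => by
      by_cases h1 : a = i <;> by_cases h2 : a = j <;> by_cases h3 : a = k <;>
        simp [h1, h2, h3, hij, hij.symm, hik, hik.symm, hjk, hjk.symm, hf, hg, hh])
  have he : ∀ x : ι → E,
      (∏ a, if a = i then f (x a) else if a = j then g (x a) else if a = k then h (x a) else 1)
        = f (x i) * (g (x j) * h (x k)) := by
    intro x
    rw [prod_eq_triple hij hik hjk _ (fun a h1 h2 h3 => by simp [h1, h2, h3])]
    simp [hij, hij.symm, hik, hik.symm, hjk, hjk.symm]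
  simpa [he] using h0

lemma pi_integral_eval₃ {i j k : ι} (hij : i ≠ j) (hik : i ≠ k) (hjk : j ≠ k)
    (f g h : E → ℝ) :
    ∫ x : ι → E, f (x i) * (g (x j) * h (x k)) ∂(Measure.pi fun _ => ν) =
      (∫ y, f y ∂ν) * ((∫ y, g y ∂ν) * ∫ y, h y ∂ν) := by
  have h0 := pi_integral_prod ν
    (fun a y => if a = i then f y else if a = j then g y else if a = k then h y else 1)
  have he : ∀ x : ι → E,
      (∏ a, if a = i then f (x a) else if a = j then g (x a) else if a = k then h (x a) else 1)
        = f (x i) * (g (x j) * h (x k)) := by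
    intro x
    rw [prod_eq_triple hij hik hjk _ (fun a h1 h2 h3 => by simp [h1, h2, h3])]
    simp [hij, hij.symm, hik, hik.symm, hjk, hjk.symm]
  have hr : (∏ a, ∫ y, (if a = i then f y else if a = j then g y
      else if a = k then h y else 1) ∂ν) =
      (∫ y, f y ∂ν) * ((∫ y, g y ∂ν) * ∫ y, h y ∂ν) := by
    rw [prod_eq_triple hij hik hjk _ (fun a h1 h2 h3 => by simp [h1, h2, h3, integral_const])]
    simp [hij, hij.symm, hik, hik.symm, hjk, hjk.symm]
  simp only [he] at h0
  rw [h0, hr]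

end PiHelpers


section GaussVec
variable {m : ℕ} (t : ℝ≥0)

local notation "μm" => (Measure.pi fun _ : Fin m => gaussianReal 0 t)

lemma int_pow1 : Integrable (fun y : ℝ => y) (gaussianReal 0 t) := by
  simpa using integrable_pow_gaussianReal t 1

lemma gvInt1 (i : Fin m) : Integrable (fun x : Fin m → ℝ => x i) μm :=
  pi_integrable_eval _ i (int_pow1 t)

lemma gv1 (i : Fin m) : ∫ x : Fin m → ℝ, x i ∂μm = 0 := by
  rw [pi_integral_eval _ i (fun y => y)]
  exact mom1 t

lemma gvInt2 (i j : Fin m) : Integrable (fun x : Fin m → ℝ => x i * x j) μm := by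
  by_cases h : i = j
  · subst h
    have := pi_integrable_eval (ι := Fin m) (gaussianReal 0 t) i
      (f := fun y => y ^ 2) (integrable_pow_gaussianReal t 2)
    simpa [pow_two] using this
  · exact pi_integrable_eval₂ _ h (int_pow1 t) (int_pow1 t)

lemma gv2 (i j : Fin m) :
    ∫ x : Fin m → ℝ, x i * x j ∂μm = if i = j then (t:ℝ) else 0 := by
  by_cases h : i = j
  · subst h
    rw [if_pos rfl]
    have := pi_integral_eval (ι := Fin m) (gaussianReal 0 t) i (fun y => y ^ 2)
    simp only [pow_two] at this
    rw [this]
    simpa [pow_two] using mom2 t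
  · rw [if_neg h, pi_integral_eval₂ _ h (fun y => y) (fun y => y), mom1, mul_zero]

lemma gvInt4 (k j j' : Fin m) :
    Integrable (fun x : Fin m → ℝ => (x k * x j) * (x k * x j')) μm := by
  by_cases hjj : j = j'
  · subst hjj
    by_cases hjk : j = k
    · subst hjk
      have := pi_integrable_eval (ι := Fin m) (gaussianReal 0 t) j
        (f := fun y => y ^ 4) (integrable_pow_gaussianReal t 4)
      exact this.congr (Eventually.of_forall fun x => by ring)
    · have := pi_integrable_eval₂ (ι := Fin m) (gaussianReal 0 t) (Ne.symm hjk)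
        (f := fun y => y ^ 2) (g := fun y => y ^ 2)
        (integrable_pow_gaussianReal t 2) (integrable_pow_gaussianReal t 2)
      exact this.congr (Eventually.of_forall fun x => by ring)
  · by_cases hjk : j = k
    · subst hjk
      have := pi_integrable_eval₂ (ι := Fin m) (gaussianReal 0 t)
        (show j ≠ j' from hjj) (f := fun y => y ^ 3) (g := fun y => y)
        (integrable_pow_gaussianReal t 3) (int_pow1 t)
      exact this.congr (Eventually.of_forall fun x => by ring)
    · by_cases hj'k : j' = k
      · subst hj'k
        have := pi_integrable_eval₂ (ι := Fin m) (gaussianReal 0 t)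
          (show j' ≠ j from Ne.symm hjj) (f := fun y => y ^ 3) (g := fun y => y)
          (integrable_pow_gaussianReal t 3) (int_pow1 t)
        exact this.congr (Eventually.of_forall fun x => by ring)
      · have := pi_integrable_eval₃ (ι := Fin m) (gaussianReal 0 t)
          (show k ≠ j from fun h => hjk h.symm) (show k ≠ j' from fun h => hj'k h.symm) hjj
          (f := fun y => y ^ 2) (g := fun y => y) (h := fun y => y)
          (integrable_pow_gaussianReal t 2) (int_pow1 t) (int_pow1 t)
        exact this.congr (Eventually.of_forall fun x => by ring)

lemma gv4 (k j j' : Fin m) :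
    ∫ x : Fin m → ℝ, (x k * x j) * (x k * x j') ∂μm =
      if j = j' then (if j = k then 3 else 1) * (t:ℝ) ^ 2 else 0 := by
  by_cases hjj : j = j'
  · subst hjj
    rw [if_pos rfl]
    by_cases hjk : j = k
    · subst hjk
      rw [if_pos rfl]
      have he : (fun x : Fin m → ℝ => (x j * x j) * (x j * x j))
          = fun x => (fun y : ℝ => y ^ 4) (x j) := by funext x; ring
      rw [he, pi_integral_eval _ j (fun y : ℝ => y ^ 4), mom4]
    · rw [if_neg hjk]
      have he : (fun x : Fin m → ℝ => (x k * x j) * (x k * x j))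
          = fun x => (fun y : ℝ => y ^ 2) (x k) * (fun y : ℝ => y ^ 2) (x j) := by
        funext x; ring
      rw [he, pi_integral_eval₂ _ (Ne.symm hjk) (fun y : ℝ => y ^ 2) (fun y : ℝ => y ^ 2),
        mom2]
      ring
  · rw [if_neg hjj]
    by_cases hjk : j = k
    · subst hjk
      have he : (fun x : Fin m → ℝ => (x j * x j) * (x j * x j'))
          = fun x => (fun y : ℝ => y ^ 3) (x j) * (fun y : ℝ => y) (x j') := by
        funext x; ring
      rw [he, pi_integral_eval₂ _ hjj (fun y : ℝ => y ^ 3) (fun y : ℝ => y), mom1, mul_zero]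
    · by_cases hj'k : j' = k
      · subst hj'k
        have he : (fun x : Fin m → ℝ => (x j' * x j) * (x j' * x j'))
            = fun x => (fun y : ℝ => y ^ 3) (x j') * (fun y : ℝ => y) (x j) := by
          funext x; ring
        rw [he, pi_integral_eval₂ _ (Ne.symm hjj) (fun y : ℝ => y ^ 3) (fun y : ℝ => y),
          mom1, mul_zero]
      · have he : (fun x : Fin m → ℝ => (x k * x j) * (x k * x j'))
            = fun x => (fun y : ℝ => y ^ 2) (x k) * ((fun y : ℝ => y) (x j)
                * (fun y : ℝ => y) (x j')) := by
          funext x; ring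
        rw [he, pi_integral_eval₃ _ (show k ≠ j from fun h => hjk h.symm)
          (show k ≠ j' from fun h => hj'k h.symm) hjj
          (fun y : ℝ => y ^ 2) (fun y : ℝ => y) (fun y : ℝ => y), mom1]
        ring

lemma gvInt3 (k j l : Fin m) :
    Integrable (fun x : Fin m → ℝ => (x k * x j) * x l) μm := by
  by_cases hkj : k = j
  · subst hkj
    by_cases hkl : k = l
    · subst hkl
      have := pi_integrable_eval (ι := Fin m) (gaussianReal 0 t) k
        (f := fun y => y ^ 3) (integrable_pow_gaussianReal t 3)
      exact this.congr (Eventually.of_forall fun x => by ring)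
    · have := pi_integrable_eval₂ (ι := Fin m) (gaussianReal 0 t) hkl
        (f := fun y => y ^ 2) (g := fun y => y)
        (integrable_pow_gaussianReal t 2) (int_pow1 t)
      exact this.congr (Eventually.of_forall fun x => by ring)
  · by_cases hkl : k = l
    · subst hkl
      have := pi_integrable_eval₂ (ι := Fin m) (gaussianReal 0 t) hkj
        (f := fun y => y ^ 2) (g := fun y => y)
        (integrable_pow_gaussianReal t 2) (int_pow1 t)
      exact this.congr (Eventually.of_forall fun x => by ring)
    · by_cases hjl : j = l
      · subst hjl
        have := pi_integrable_eval₂ (ι := Fin m) (gaussianReal 0 t) (Ne.symm hkj)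
          (f := fun y => y ^ 2) (g := fun y => y)
          (integrable_pow_gaussianReal t 2) (int_pow1 t)
        exact this.congr (Eventually.of_forall fun x => by ring)
      · have := pi_integrable_eval₃ (ι := Fin m) (gaussianReal 0 t) hkj hkl hjl
          (f := fun y => y) (g := fun y => y) (h := fun y => y)
          (int_pow1 t) (int_pow1 t) (int_pow1 t)
        exact this.congr (Eventually.of_forall fun x => by ring)

end GaussVec

section ZLayer
variable {n d : ℕ}

/-- Row measure: iid standard normals on `Fin d → ℝ`. -/
local notation "νr" => (Measure.pi fun _ : Fin d => gaussianReal 0 (1:ℝ≥0))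
local notation "μZ" => (Measure.pi fun _ : Fin n => (Measure.pi fun _ : Fin d => gaussianReal 0 (1:ℝ≥0)))

variable (v : Fin d → ℝ)

/-- Integrability of two-entry monomials of the design. -/
lemma zInt2 (i i' : Fin n) (k k' : Fin d) :
    Integrable (fun Z : Fin n → Fin d → ℝ => Z i k * Z i' k') μZ := by
  by_cases h : i = i'
  · subst h
    exact pi_integrable_eval νr i (f := fun row => row k * row k') (gvInt2 1 k k')
  · exact pi_integrable_eval₂ νr h (f := fun row => row k) (g := fun row => row k')
      (gvInt1 1 k) (gvInt1 1 k')

lemma z2 (i i' : Fin n) (k k' : Fin d) :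
    ∫ Z : Fin n → Fin d → ℝ, Z i k * Z i' k' ∂μZ =
      if i = i' ∧ k = k' then 1 else 0 := by
  by_cases h : i = i'
  · subst h
    have := pi_integral_eval νr i (fun row : Fin d → ℝ => row k * row k')
    rw [this, gv2 1 k k']
    simp
  · rw [pi_integral_eval₂ νr h (fun row : Fin d → ℝ => row k) (fun row : Fin d → ℝ => row k'),
      gv1 1 k, zero_mul]
    simp [h]

lemma zInt3 (i i' : Fin n) (k j k'' : Fin d) :
    Integrable (fun Z : Fin n → Fin d → ℝ => (Z i k * Z i j) * Z i' k'') μZ := by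
  by_cases h : i = i'
  · subst h
    exact pi_integrable_eval νr i (f := fun row => (row k * row j) * row k'')
      (gvInt3 1 k j k'')
  · exact pi_integrable_eval₂ νr h (f := fun row => row k * row j) (g := fun row => row k'')
      (gvInt2 1 k j) (gvInt1 1 k'')

lemma zInt4 (i i' : Fin n) (k j j' : Fin d) :
    Integrable (fun Z : Fin n → Fin d → ℝ => (Z i k * Z i j) * (Z i' k * Z i' j')) μZ := by
  by_cases h : i = i'
  · subst h
    exact pi_integrable_eval νr i (f := fun row => (row k * row j) * (row k * row j'))
      (gvInt4 1 k j j')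
  · exact pi_integrable_eval₂ νr h (f := fun row => row k * row j)
      (g := fun row => row k * row j') (gvInt2 1 k j) (gvInt2 1 k j')

lemma z4 (i i' : Fin n) (k j j' : Fin d) :
    ∫ Z : Fin n → Fin d → ℝ, (Z i k * Z i j) * (Z i' k * Z i' j') ∂μZ =
      if i = i' then (if j = j' then (if j = k then (3:ℝ) else 1) else 0)
      else (if k = j then 1 else 0) * (if k = j' then 1 else 0) := by
  by_cases h : i = i'
  · subst h
    rw [pi_integral_eval νr i (fun row : Fin d → ℝ => (row k * row j) * (row k * row j')),
      gv4 1 k j j']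
    simp
  · rw [pi_integral_eval₂ νr h (fun row : Fin d → ℝ => row k * row j)
        (fun row : Fin d → ℝ => row k * row j'),
      gv2 1 k j, gv2 1 k j']
    simp [h]

end ZLayer

section ProdLayer
variable {n d : ℕ} (σ2 : ℝ≥0) (v : Fin d → ℝ)

local notation "νr" => (Measure.pi fun _ : Fin d => gaussianReal 0 (1:ℝ≥0))
local notation "μZ" => (Measure.pi fun _ : Fin n => (Measure.pi fun _ : Fin d => gaussianReal 0 (1:ℝ≥0)))
local notation "με" => (Measure.pi fun _ : Fin n => gaussianReal 0 σ2)
local notation "μP" => Measure.prod (Measure.pi fun _ : Fin n => (Measure.pi fun _ : Fin d => gaussianReal 0 (1:ℝ≥0))) (Measure.pi fun _ : Fin n => gaussianReal 0 σ2)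

lemma zInt1 (i : Fin n) (k : Fin d) :
    Integrable (fun Z : Fin n → Fin d → ℝ => Z i k) μZ :=
  pi_integrable_eval νr i (f := fun row => row k) (gvInt1 1 k)

/-- `F1` expansion. -/
lemma hF1 (i i' : Fin n) (k : Fin d) :
    (fun Z : Fin n → Fin d → ℝ =>
        (Z i k * ∑ j, Z i j * v j) * (Z i' k * ∑ j, Z i' j * v j)) =
      fun Z => ∑ j, ∑ j', (v j * v j') * ((Z i k * Z i j) * (Z i' k * Z i' j')) := by
  funext Z
  rw [Finset.mul_sum, Finset.mul_sum, Finset.sum_mul_sum]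
  exact Finset.sum_congr rfl fun j _ => Finset.sum_congr rfl fun j' _ => by ring

lemma IF1 (i i' : Fin n) (k : Fin d) :
    Integrable (fun Z : Fin n → Fin d → ℝ =>
      (Z i k * ∑ j, Z i j * v j) * (Z i' k * ∑ j, Z i' j * v j)) μZ := by
  rw [hF1]
  exact integrable_finset_sum _ fun j _ =>
    integrable_finset_sum _ fun j' _ => (zInt4 i i' k j j').const_mul _

lemma VF1 (i i' : Fin n) (k : Fin d) :
    ∫ Z : Fin n → Fin d → ℝ,
        (Z i k * ∑ j, Z i j * v j) * (Z i' k * ∑ j, Z i' j * v j) ∂μZ =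
      if i = i' then (∑ j, v j ^ 2) + 2 * v k ^ 2 else v k ^ 2 := by
  rw [hF1, integral_finset_sum _ (fun j _ =>
    integrable_finset_sum _ fun j' _ => (zInt4 i i' k j j').const_mul _)]
  have h1 : ∀ j, ∫ Z : Fin n → Fin d → ℝ,
      (∑ j', (v j * v j') * ((Z i k * Z i j) * (Z i' k * Z i' j'))) ∂μZ
      = ∑ j', (v j * v j') * ∫ Z : Fin n → Fin d → ℝ,
          (Z i k * Z i j) * (Z i' k * Z i' j') ∂μZ := by
    intro j
    rw [integral_finset_sum _ (fun j' _ => (zInt4 i i' k j j').const_mul _)]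
    exact Finset.sum_congr rfl fun j' _ => integral_const_mul _ _
  simp_rw [h1, z4]
  by_cases h : i = i'
  · simp only [h, if_true]
    have h2 : ∀ j j' : Fin d, v j * v j' *
        (if j = j' then (if j = k then (3:ℝ) else 1) else 0)
        = if j = j' then v j * v j' * (if j = k then (3:ℝ) else 1) else 0 := fun j j' => by
      split <;> ring
    simp_rw [h2, Finset.sum_ite_eq, Finset.mem_univ, if_true]
    have h3 : ∀ j : Fin d, v j * v j * (if j = k then (3:ℝ) else 1)
        = v j ^ 2 + (if j = k then 2 * v j ^ 2 else 0) := fun j => by split <;> ring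
    simp_rw [h3, Finset.sum_add_distrib, Finset.sum_ite_eq', Finset.mem_univ, if_true]
  · simp only [h, if_false]
    simp only [mul_ite, mul_one, mul_zero, ite_mul, zero_mul, Finset.sum_ite_eq,
      Finset.mem_univ, if_true]
    ring

lemma hF2 (i i' : Fin n) (k : Fin d) :
    (fun Z : Fin n → Fin d → ℝ => (Z i k * ∑ j, Z i j * v j) * Z i' k) =
      fun Z => ∑ j, v j * ((Z i k * Z i j) * Z i' k) := by
  funext Z
  rw [Finset.mul_sum, Finset.sum_mul]
  exact Finset.sum_congr rfl fun j _ => by ring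

lemma IF2 (i i' : Fin n) (k : Fin d) :
    Integrable (fun Z : Fin n → Fin d → ℝ => (Z i k * ∑ j, Z i j * v j) * Z i' k) μZ := by
  rw [hF2]
  exact integrable_finset_sum _ fun j _ => (zInt3 i i' k j k).const_mul _

lemma IF0 (i : Fin n) (k : Fin d) :
    Integrable (fun Z : Fin n → Fin d → ℝ => Z i k * ∑ j, Z i j * v j) μZ := by
  have : (fun Z : Fin n → Fin d → ℝ => Z i k * ∑ j, Z i j * v j) =
      fun Z => ∑ j, v j * (Z i k * Z i j) := by
    funext Z
    rw [Finset.mul_sum]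
    exact Finset.sum_congr rfl fun j _ => by ring
  rw [this]
  exact integrable_finset_sum _ fun j _ => (zInt2 i i k j).const_mul _

lemma VF0 (i : Fin n) (k : Fin d) :
    ∫ Z : Fin n → Fin d → ℝ, Z i k * ∑ j, Z i j * v j ∂μZ = v k := by
  have : (fun Z : Fin n → Fin d → ℝ => Z i k * ∑ j, Z i j * v j) =
      fun Z => ∑ j, v j * (Z i k * Z i j) := by
    funext Z
    rw [Finset.mul_sum]
    exact Finset.sum_congr rfl fun j _ => by ring
  rw [this, integral_finset_sum _ (fun j _ => (zInt2 i i k j).const_mul _)]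
  have h1 : ∀ j, ∫ Z : Fin n → Fin d → ℝ, v j * (Z i k * Z i j) ∂μZ
      = v j * (if k = j then 1 else 0) := by
    intro j
    rw [integral_const_mul, z2]
    simp
  simp_rw [h1, mul_ite, mul_one, mul_zero, Finset.sum_ite_eq, Finset.mem_univ, if_true]

/-- The key atom integrability. -/
lemma atomInt (k : Fin d) (i i' : Fin n) :
    Integrable (fun ω : (Fin n → Fin d → ℝ) × (Fin n → ℝ) =>
      (ω.1 i k * ((∑ j, ω.1 i j * v j) + ω.2 i)) *
      (ω.1 i' k * ((∑ j, ω.1 i' j * v j) + ω.2 i'))) μP := by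
  have I1 : Integrable (fun ω : (Fin n → Fin d → ℝ) × (Fin n → ℝ) =>
      (ω.1 i k * ∑ j, ω.1 i j * v j) * (ω.1 i' k * ∑ j, ω.1 i' j * v j) * 1) μP :=
    (IF1 v i i' k).mul_prod (integrable_const 1)
  have I2 : Integrable (fun ω : (Fin n → Fin d → ℝ) × (Fin n → ℝ) =>
      (ω.1 i k * ∑ j, ω.1 i j * v j) * ω.1 i' k * ω.2 i') μP :=
    (IF2 v i i' k).mul_prod (gvInt1 σ2 i')
  have I3 : Integrable (fun ω : (Fin n → Fin d → ℝ) × (Fin n → ℝ) =>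
      (ω.1 i' k * ∑ j, ω.1 i' j * v j) * ω.1 i k * ω.2 i) μP :=
    (IF2 v i' i k).mul_prod (gvInt1 σ2 i)
  have I4 : Integrable (fun ω : (Fin n → Fin d → ℝ) × (Fin n → ℝ) =>
      ω.1 i k * ω.1 i' k * (ω.2 i * ω.2 i')) μP :=
    (zInt2 i i' k k).mul_prod (gvInt2 σ2 i i')
  have h := I1.add (I2.add (I3.add I4))
  exact h.congr (Eventually.of_forall fun ω => by simp only [Pi.add_apply]; ring)

/-- The key atom value. -/
lemma atomVal (k : Fin d) (i i' : Fin n) :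
    ∫ ω : (Fin n → Fin d → ℝ) × (Fin n → ℝ),
      (ω.1 i k * ((∑ j, ω.1 i j * v j) + ω.2 i)) *
      (ω.1 i' k * ((∑ j, ω.1 i' j * v j) + ω.2 i')) ∂μP =
      if i = i' then (∑ j, v j ^ 2) + 2 * v k ^ 2 + (σ2:ℝ) else v k ^ 2 := by
  have I1 : Integrable (fun ω : (Fin n → Fin d → ℝ) × (Fin n → ℝ) =>
      (ω.1 i k * ∑ j, ω.1 i j * v j) * (ω.1 i' k * ∑ j, ω.1 i' j * v j) * 1) μP :=
    (IF1 v i i' k).mul_prod (integrable_const 1)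
  have I2 : Integrable (fun ω : (Fin n → Fin d → ℝ) × (Fin n → ℝ) =>
      (ω.1 i k * ∑ j, ω.1 i j * v j) * ω.1 i' k * ω.2 i') μP :=
    (IF2 v i i' k).mul_prod (gvInt1 σ2 i')
  have I3 : Integrable (fun ω : (Fin n → Fin d → ℝ) × (Fin n → ℝ) =>
      (ω.1 i' k * ∑ j, ω.1 i' j * v j) * ω.1 i k * ω.2 i) μP :=
    (IF2 v i' i k).mul_prod (gvInt1 σ2 i)
  have I4 : Integrable (fun ω : (Fin n → Fin d → ℝ) × (Fin n → ℝ) =>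
      ω.1 i k * ω.1 i' k * (ω.2 i * ω.2 i')) μP :=
    (zInt2 i i' k k).mul_prod (gvInt2 σ2 i i')
  have I34 : Integrable (fun ω : (Fin n → Fin d → ℝ) × (Fin n → ℝ) =>
      (ω.1 i' k * ∑ j, ω.1 i' j * v j) * ω.1 i k * ω.2 i
        + ω.1 i k * ω.1 i' k * (ω.2 i * ω.2 i')) μP := I3.add I4
  have I234 : Integrable (fun ω : (Fin n → Fin d → ℝ) × (Fin n → ℝ) =>
      (ω.1 i k * ∑ j, ω.1 i j * v j) * ω.1 i' k * ω.2 i'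
        + ((ω.1 i' k * ∑ j, ω.1 i' j * v j) * ω.1 i k * ω.2 i
          + ω.1 i k * ω.1 i' k * (ω.2 i * ω.2 i'))) μP := I2.add I34
  have hdec : (fun ω : (Fin n → Fin d → ℝ) × (Fin n → ℝ) =>
      (ω.1 i k * ((∑ j, ω.1 i j * v j) + ω.2 i)) *
      (ω.1 i' k * ((∑ j, ω.1 i' j * v j) + ω.2 i'))) =
      fun ω : (Fin n → Fin d → ℝ) × (Fin n → ℝ) =>
        (ω.1 i k * ∑ j, ω.1 i j * v j) * (ω.1 i' k * ∑ j, ω.1 i' j * v j) * 1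
        + ((ω.1 i k * ∑ j, ω.1 i j * v j) * ω.1 i' k * ω.2 i'
        + ((ω.1 i' k * ∑ j, ω.1 i' j * v j) * ω.1 i k * ω.2 i
          + ω.1 i k * ω.1 i' k * (ω.2 i * ω.2 i'))) := by
    funext ω
    ring
  rw [show (fun ω : (Fin n → Fin d → ℝ) × (Fin n → ℝ) =>
      (ω.1 i k * ((∑ j, ω.1 i j * v j) + ω.2 i)) *
      (ω.1 i' k * ((∑ j, ω.1 i' j * v j) + ω.2 i'))) = _ from hdec,
    integral_add I1 I234, integral_add I2 I34, integral_add I3 I4,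
    integral_prod_mul (f := fun Z : Fin n → Fin d → ℝ =>
        (Z i k * ∑ j, Z i j * v j) * (Z i' k * ∑ j, Z i' j * v j))
      (g := fun _ : Fin n → ℝ => (1:ℝ)),
    integral_prod_mul (f := fun Z : Fin n → Fin d → ℝ =>
        (Z i k * ∑ j, Z i j * v j) * Z i' k) (g := fun e : Fin n → ℝ => e i'),
    integral_prod_mul (f := fun Z : Fin n → Fin d → ℝ =>
        (Z i' k * ∑ j, Z i' j * v j) * Z i k) (g := fun e : Fin n → ℝ => e i),
    integral_prod_mul (f := fun Z : Fin n → Fin d → ℝ => Z i k * Z i' k)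
      (g := fun e : Fin n → ℝ => e i * e i'),
    VF1 v i i' k, gv1 σ2 i', gv1 σ2 i, z2 i i' k k, gv2 σ2 i i']
  simp only [mul_zero, add_zero, integral_const, measure_univ, probReal_univ, ENNReal.toReal_one,
    smul_eq_mul, mul_one, and_true]
  by_cases h : i = i' <;> simp [h]

lemma aInt (k : Fin d) (i : Fin n) :
    Integrable (fun ω : (Fin n → Fin d → ℝ) × (Fin n → ℝ) =>
      ω.1 i k * ((∑ j, ω.1 i j * v j) + ω.2 i)) μP := by
  have I1 : Integrable (fun ω : (Fin n → Fin d → ℝ) × (Fin n → ℝ) =>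
      (ω.1 i k * ∑ j, ω.1 i j * v j) * 1) μP := (IF0 v i k).mul_prod (integrable_const 1)
  have I2 : Integrable (fun ω : (Fin n → Fin d → ℝ) × (Fin n → ℝ) =>
      ω.1 i k * ω.2 i) μP := (zInt1 i k).mul_prod (gvInt1 σ2 i)
  exact (I1.add I2).congr (Eventually.of_forall fun ω => by simp only [Pi.add_apply]; ring)

lemma aVal (k : Fin d) (i : Fin n) :
    ∫ ω : (Fin n → Fin d → ℝ) × (Fin n → ℝ),
      ω.1 i k * ((∑ j, ω.1 i j * v j) + ω.2 i) ∂μP = v k := by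
  have I1 : Integrable (fun ω : (Fin n → Fin d → ℝ) × (Fin n → ℝ) =>
      (ω.1 i k * ∑ j, ω.1 i j * v j) * 1) μP := (IF0 v i k).mul_prod (integrable_const 1)
  have I2 : Integrable (fun ω : (Fin n → Fin d → ℝ) × (Fin n → ℝ) =>
      ω.1 i k * ω.2 i) μP := (zInt1 i k).mul_prod (gvInt1 σ2 i)
  have hdec : (fun ω : (Fin n → Fin d → ℝ) × (Fin n → ℝ) =>
      ω.1 i k * ((∑ j, ω.1 i j * v j) + ω.2 i)) =
      fun ω : (Fin n → Fin d → ℝ) × (Fin n → ℝ) =>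
        (ω.1 i k * ∑ j, ω.1 i j * v j) * 1 + ω.1 i k * ω.2 i := by
    funext ω; ring
  rw [show (fun ω : (Fin n → Fin d → ℝ) × (Fin n → ℝ) =>
      ω.1 i k * ((∑ j, ω.1 i j * v j) + ω.2 i)) = _ from hdec,
    integral_add I1 I2,
    integral_prod_mul (f := fun Z : Fin n → Fin d → ℝ => Z i k * ∑ j, Z i j * v j)
      (g := fun _ : Fin n → ℝ => (1:ℝ)),
    integral_prod_mul (f := fun Z : Fin n → Fin d → ℝ => Z i k)
      (g := fun e : Fin n → ℝ => e i),
    VF0 v i k, gv1 σ2 i]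
  simp

lemma WInt (k : Fin d) :
    Integrable (fun ω : (Fin n → Fin d → ℝ) × (Fin n → ℝ) =>
      ∑ i, ω.1 i k * ((∑ j, ω.1 i j * v j) + ω.2 i)) μP :=
  integrable_finset_sum _ fun i _ => aInt σ2 v k i

lemma WVal (k : Fin d) :
    ∫ ω : (Fin n → Fin d → ℝ) × (Fin n → ℝ),
      (∑ i, ω.1 i k * ((∑ j, ω.1 i j * v j) + ω.2 i)) ∂μP = (n:ℝ) * v k := by
  rw [integral_finset_sum _ fun i _ => aInt σ2 v k i]
  simp_rw [aVal σ2 v k]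
  simp [Finset.sum_const, mul_comm]

lemma hsq (k : Fin d) :
    (fun ω : (Fin n → Fin d → ℝ) × (Fin n → ℝ) =>
      (∑ i, ω.1 i k * ((∑ j, ω.1 i j * v j) + ω.2 i)) ^ 2) =
      fun ω => ∑ i, ∑ i', (ω.1 i k * ((∑ j, ω.1 i j * v j) + ω.2 i)) *
        (ω.1 i' k * ((∑ j, ω.1 i' j * v j) + ω.2 i')) := by
  funext ω
  rw [sq, Finset.sum_mul_sum]

lemma W2Int (k : Fin d) :
    Integrable (fun ω : (Fin n → Fin d → ℝ) × (Fin n → ℝ) =>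
      (∑ i, ω.1 i k * ((∑ j, ω.1 i j * v j) + ω.2 i)) ^ 2) μP := by
  rw [hsq]
  exact integrable_finset_sum _ fun i _ =>
    integrable_finset_sum _ fun i' _ => atomInt σ2 v k i i'

lemma W2Val (k : Fin d) :
    ∫ ω : (Fin n → Fin d → ℝ) × (Fin n → ℝ),
      (∑ i, ω.1 i k * ((∑ j, ω.1 i j * v j) + ω.2 i)) ^ 2 ∂μP =
      (n:ℝ) * ((∑ j, v j ^ 2) + 2 * v k ^ 2 + (σ2:ℝ)) + ((n:ℝ) ^ 2 - n) * v k ^ 2 := by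
  rw [hsq, integral_finset_sum _ (fun i _ =>
    integrable_finset_sum _ fun i' _ => atomInt σ2 v k i i')]
  have h1 : ∀ i : Fin n, ∫ ω : (Fin n → Fin d → ℝ) × (Fin n → ℝ),
      (∑ i', (ω.1 i k * ((∑ j, ω.1 i j * v j) + ω.2 i)) *
        (ω.1 i' k * ((∑ j, ω.1 i' j * v j) + ω.2 i'))) ∂μP
      = ∑ i', if i = i' then (∑ j, v j ^ 2) + 2 * v k ^ 2 + (σ2:ℝ) else v k ^ 2 := by
    intro i
    rw [integral_finset_sum _ fun i' _ => atomInt σ2 v k i i']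
    exact Finset.sum_congr rfl fun i' _ => atomVal σ2 v k i i'
  simp_rw [h1]
  set A := (∑ j, v j ^ 2) + 2 * v k ^ 2 + (σ2:ℝ) with hA
  set B := v k ^ 2 with hB
  have h2 : ∀ i : Fin n, (∑ i', if i = i' then A else B) = (n:ℝ) * B + (A - B) := by
    intro i
    have h3 : ∀ i' : Fin n, (if i = i' then A else B) = B + (if i = i' then A - B else 0) := by
      intro i'; split <;> ring
    simp_rw [h3, Finset.sum_add_distrib, Finset.sum_const, Finset.card_univ, Fintype.card_fin,
      Finset.sum_ite_eq, Finset.mem_univ, if_true, nsmul_eq_mul]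
  simp_rw [h2, Finset.sum_const, Finset.card_univ, Fintype.card_fin, nsmul_eq_mul]
  ring

lemma TkInt (k : Fin d) :
    Integrable (fun ω : (Fin n → Fin d → ℝ) × (Fin n → ℝ) =>
      ((n:ℝ)⁻¹ * (∑ i, ω.1 i k * ((∑ j, ω.1 i j * v j) + ω.2 i)) - v k) ^ 2) μP := by
  have h := (((W2Int (n := n) σ2 v k).const_mul ((n:ℝ)⁻¹ ^ 2)).add
    (((WInt (n := n) σ2 v k).const_mul (-(2 * (n:ℝ)⁻¹ * v k))).add (integrable_const (v k ^ 2))))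
  exact h.congr (Eventually.of_forall fun ω => by simp only [Pi.add_apply]; ring)

lemma TkVal (hn : 0 < n) (k : Fin d) :
    ∫ ω : (Fin n → Fin d → ℝ) × (Fin n → ℝ),
      ((n:ℝ)⁻¹ * (∑ i, ω.1 i k * ((∑ j, ω.1 i j * v j) + ω.2 i)) - v k) ^ 2 ∂μP =
      ((∑ j, v j ^ 2) + (σ2:ℝ) + v k ^ 2) / n := by
  have hdec : (fun ω : (Fin n → Fin d → ℝ) × (Fin n → ℝ) =>
      ((n:ℝ)⁻¹ * (∑ i, ω.1 i k * ((∑ j, ω.1 i j * v j) + ω.2 i)) - v k) ^ 2) =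
      fun ω : (Fin n → Fin d → ℝ) × (Fin n → ℝ) =>
        (n:ℝ)⁻¹ ^ 2 * (∑ i, ω.1 i k * ((∑ j, ω.1 i j * v j) + ω.2 i)) ^ 2
        + (-(2 * (n:ℝ)⁻¹ * v k) * (∑ i, ω.1 i k * ((∑ j, ω.1 i j * v j) + ω.2 i))
          + v k ^ 2) := by
    funext ω; ring
  have IW : Integrable (fun ω : (Fin n → Fin d → ℝ) × (Fin n → ℝ) =>
      -(2 * (n:ℝ)⁻¹ * v k) * (∑ i, ω.1 i k * ((∑ j, ω.1 i j * v j) + ω.2 i))) μP :=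
    (WInt σ2 v k).const_mul _
  have IC : Integrable (fun _ : (Fin n → Fin d → ℝ) × (Fin n → ℝ) => v k ^ 2) μP :=
    integrable_const _
  have I23 : Integrable (fun ω : (Fin n → Fin d → ℝ) × (Fin n → ℝ) =>
      -(2 * (n:ℝ)⁻¹ * v k) * (∑ i, ω.1 i k * ((∑ j, ω.1 i j * v j) + ω.2 i)) + v k ^ 2) μP :=
    IW.add IC
  rw [show (fun ω : (Fin n → Fin d → ℝ) × (Fin n → ℝ) =>
      ((n:ℝ)⁻¹ * (∑ i, ω.1 i k * ((∑ j, ω.1 i j * v j) + ω.2 i)) - v k) ^ 2) = _ from hdec,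
    integral_add ((W2Int σ2 v k).const_mul ((n:ℝ)⁻¹ ^ 2)) I23,
    integral_add IW IC,
    integral_const_mul, integral_const_mul, integral_const, W2Val σ2 v k, WVal σ2 v k]
  have hn' : (n:ℝ) ≠ 0 := Nat.cast_ne_zero.mpr hn.ne'
  simp only [measure_univ, probReal_univ, ENNReal.toReal_one, smul_eq_mul, one_mul]
  field_simp
  ring

lemma mainInt :
    Integrable (fun ω : (Fin n → Fin d → ℝ) × (Fin n → ℝ) =>
      ∑ k, ((n:ℝ)⁻¹ * (∑ i, ω.1 i k * ((∑ j, ω.1 i j * v j) + ω.2 i)) - v k) ^ 2) μP :=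
  integrable_finset_sum _ fun k _ => TkInt σ2 v k

lemma mainVal (hn : 0 < n) :
    ∫ ω : (Fin n → Fin d → ℝ) × (Fin n → ℝ),
      (∑ k, ((n:ℝ)⁻¹ * (∑ i, ω.1 i k * ((∑ j, ω.1 i j * v j) + ω.2 i)) - v k) ^ 2) ∂μP =
      ((d:ℝ) * σ2 + ((d:ℝ) + 1) * ∑ j, v j ^ 2) / n := by
  rw [integral_finset_sum _ fun k _ => TkInt σ2 v k]
  simp_rw [TkVal σ2 v hn]
  rw [← Finset.sum_div]
  congr 1
  rw [Finset.sum_add_distrib, Finset.sum_const, Finset.card_univ, Fintype.card_fin,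
    nsmul_eq_mul]
  ring

end ProdLayer

end DickerAux


namespace Dicker

/-- Sample space: raw iid standard normal design entries and the error vector. -/
abbrev Omega (n d : ℕ) : Type := (Fin n → Fin d → ℝ) × (Fin n → ℝ)

/-- Law of the raw matrix of iid standard normal entries. -/
def PX (n d : ℕ) : Measure (Fin n → Fin d → ℝ) :=
  Measure.pi fun _ => Measure.pi fun _ => gaussianReal 0 1

/-- Base probability measure of the Gaussian linear model with noise variance `σ2`. -/
def P (n d : ℕ) (σ2 : ℝ≥0) : Measure (Omega n d) :=
  (PX n d).prod (Measure.pi fun _ : Fin n => gaussianReal 0 σ2)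

/-- Square root of a positive semidefinite matrix (junk value `0` otherwise). -/
def msqrt {d : ℕ} (S : Matrix (Fin d) (Fin d) ℝ) : Matrix (Fin d) (Fin d) ℝ :=
  if h : S.PosSemidef then
    (h.1.eigenvectorUnitary : Matrix (Fin d) (Fin d) ℝ) *
      Matrix.diagonal (Real.sqrt ∘ h.1.eigenvalues) *
      (star h.1.eigenvectorUnitary : Matrix (Fin d) (Fin d) ℝ)
  else 0

/-- The design matrix `X`, whose rows are iid `N(0, S)`. -/
def dMat {n d : ℕ} (S : Matrix (Fin d) (Fin d) ℝ) (ω : Omega n d) :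
    Matrix (Fin n) (Fin d) ℝ :=
  Matrix.of ω.1 * msqrt S

/-- The response vector `y = X β + ε`. -/
def resp {n d : ℕ} (S : Matrix (Fin d) (Fin d) ℝ) (β : Fin d → ℝ) (ω : Omega n d) :
    Fin n → ℝ :=
  dMat S ω *ᵥ β + ω.2

/-- An estimator of the coefficient vector, a function of the data `(y, X)`. -/
abbrev Estimator (n d : ℕ) : Type :=
  (Fin n → ℝ) → Matrix (Fin n) (Fin d) ℝ → (Fin d → ℝ)

/-- The predictive risk `R_V(est) = σ⁻² E[(est − β)ᵀ Σ (est − β)]`. -/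
def risk {d : ℕ} (n : ℕ) (S : Matrix (Fin d) (Fin d) ℝ) (β : Fin d → ℝ) (σ2 : ℝ≥0)
    (est : Estimator n d) : ℝ≥0∞ :=
  (σ2 : ℝ≥0∞)⁻¹ *
    ∫⁻ ω, ENNReal.ofReal
      ((est (resp S β ω) (dMat S ω) - β) ⬝ᵥ (S *ᵥ (est (resp S β ω) (dMat S ω) - β)))
      ∂(P n d σ2)

/-- The signal-to-noise ratio `η² = βᵀ Σ β / σ²`. -/
def snr {d : ℕ} (S : Matrix (Fin d) (Fin d) ℝ) (β : Fin d → ℝ) (σ2 : ℝ≥0) : ℝ :=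
  (β ⬝ᵥ S *ᵥ β) / σ2

/-- The Moore–Penrose pseudoinverse of a square real matrix, characterized by the four
Penrose conditions (which determine it uniquely; it always exists). -/
def pinv {k : ℕ} (A : Matrix (Fin k) (Fin k) ℝ) : Matrix (Fin k) (Fin k) ℝ :=
  if h : ∃ B, A * B * A = A ∧ B * A * B = B ∧ (A * B)ᵀ = A * B ∧ (B * A)ᵀ = B * A
  then h.choose else 0

/-- The OLS estimator `(XᵀX)⁻ Xᵀ y` (Moore–Penrose pseudoinverse version). -/
def ols {n d : ℕ} : Estimator n d := fun y X => (pinv (Xᵀ * X) * Xᵀ) *ᵥ y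

/-- The OLS estimator `(XᵀX)⁻¹ Xᵀ y` (matrix-inverse version). -/
def olsI {n d : ℕ} : Estimator n d := fun y X => ((Xᵀ * X)⁻¹ * Xᵀ) *ᵥ y

/-- The trivial estimator `β̂ = 0`. -/
def nullEst {n d : ℕ} : Estimator n d := fun _ _ => 0

/-- The James–Stein estimator with shrinkage parameter `λ ∈ [0,∞]`; `β̂_js(∞) = 0`. -/
def jsE {n d : ℕ} (lam : ℝ≥0∞) : Estimator n d :=
  fun y X => if lam = ∞ then 0 else (1 + lam.toReal)⁻¹ • ols y X

/-- The oracle James–Stein shrinkage parameter `λ_js*`. -/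
def lamJSStar (n d : ℕ) (e : ℝ) : ℝ≥0∞ :=
  if d + 1 < n then (d : ℝ≥0∞) / (ENNReal.ofReal e * ((n : ℝ≥0∞) - d - 1))
  else if n + 1 < d then (d : ℝ≥0∞) / (ENNReal.ofReal e * ((d : ℝ≥0∞) - n - 1))
  else ∞

/-- The ridge estimator `(XᵀX + nλΣ)⁻ Xᵀ y` (pseudoinverse version). -/
def ridgeP {n d : ℕ} (S : Matrix (Fin d) (Fin d) ℝ) (lam : ℝ) : Estimator n d :=
  fun y X => (pinv (Xᵀ * X + ((n : ℝ) * lam) • S) * Xᵀ) *ᵥ y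

/-- Pseudoinverse ridge estimator with parameter `λ ∈ [0,∞]`; equal to `0` at `λ = ∞`. -/
def ridgePE {n d : ℕ} (S : Matrix (Fin d) (Fin d) ℝ) (lam : ℝ≥0∞) : Estimator n d :=
  fun y X => if lam = ∞ then 0 else ridgeP S lam.toReal y X

/-- The ridge estimator `(XᵀX + nλΣ)⁻¹ Xᵀ y` (matrix-inverse version). -/
def ridgeI {n d : ℕ} (S : Matrix (Fin d) (Fin d) ℝ) (lam : ℝ) : Estimator n d :=
  fun y X => ((Xᵀ * X + ((n : ℝ) * lam) • S)⁻¹ * Xᵀ) *ᵥ y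

/-- Matrix-inverse ridge estimator with parameter `λ ∈ [0,∞]`; equal to `0` at `λ = ∞`. -/
def ridgeIE {n d : ℕ} (S : Matrix (Fin d) (Fin d) ℝ) (lam : ℝ≥0∞) : Estimator n d :=
  fun y X => if lam = ∞ then 0 else ridgeI S lam.toReal y X

/-- The marginal regression estimator `n⁻¹ Σ⁻¹ Xᵀ y`. -/
def marg {n d : ℕ} (S : Matrix (Fin d) (Fin d) ℝ) : Estimator n d :=
  fun y X => (n : ℝ)⁻¹ • ((S⁻¹ * Xᵀ) *ᵥ y)

/-- Squared Euclidean norm of a vector. -/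
def sqnorm {m : ℕ} (v : Fin m → ℝ) : ℝ := ∑ i, (v i) ^ 2

/-- The usual estimator `σ̂² = (n−d)⁻¹ ‖y − X β̂_ols‖²` of the noise variance. -/
def hatSigma2 {n d : ℕ} (y : Fin n → ℝ) (X : Matrix (Fin n) (Fin d) ℝ) : ℝ :=
  ((n : ℝ) - d)⁻¹ * sqnorm (y - X *ᵥ olsI y X)

/-- The estimator `η̂² = max{‖y‖²/(n σ̂²) − 1, 0}` of the signal-to-noise ratio. -/
def hatEta2 {n d : ℕ} (y : Fin n → ℝ) (X : Matrix (Fin n) (Fin d) ℝ) : ℝ :=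
  max (sqnorm y / ((n : ℝ) * hatSigma2 y X) - 1) 0

/-- The adaptive ridge estimator `β̌_r`, with `λ̂_r* = d/(n η̂²)` (equal to `0` when `η̂² = 0`). -/
def adaRidge {n d : ℕ} (S : Matrix (Fin d) (Fin d) ℝ) : Estimator n d :=
  fun y X => if hatEta2 y X = 0 then 0
    else ridgeI S ((d : ℝ) / ((n : ℝ) * hatEta2 y X)) y X

/-- The adaptive James–Stein estimator `β̌_js`, with `λ̂_js* = d/(η̂²(n−d−1))`
(equal to `0` when `η̂² = 0`). -/
def adaJS {n d : ℕ} : Estimator n d :=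
  fun y X => if hatEta2 y X = 0 then 0
    else (1 + (d : ℝ) / (hatEta2 y X * ((n : ℝ) - d - 1)))⁻¹ • olsI y X

/-- Stieltjes transform of the Marčenko–Pastur distribution. -/
def mMP (ρ s : ℝ) : ℝ :=
  -(1 / (2 * ρ * s)) * (s + ρ - 1 + Real.sqrt ((s + ρ - 1) ^ 2 - 4 * ρ * s))

/-- Closed form of the asymptotic predictive risk of the oracle ridge estimator. -/
def Rr (ρ e : ℝ) : ℝ :=
  (1 / (2 * ρ)) * (e * (ρ - 1) - ρ + Real.sqrt ((e * (ρ - 1) - ρ) ^ 2 + 4 * ρ ^ 2 * e))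

/-- The `ℓ²→ℓ²` operator norm of a square real matrix. -/
def opNorm {k : ℕ} (A : Matrix (Fin k) (Fin k) ℝ) : ℝ :=
  ‖Matrix.toEuclideanCLM (𝕜 := ℝ) A‖

/-- Smallest eigenvalue of a Hermitian real matrix (junk value `0` otherwise). -/
def smallestEig {k : ℕ} (S : Matrix (Fin k) (Fin k) ℝ) : ℝ :=
  if h : S.IsHermitian then ⨅ i, h.eigenvalues i else 0


/-- The oracle ridge shrinkage parameter `λ_r* = d/(n η²)` (in `[0,∞]`). -/
def lamRStar (n d : ℕ) (e : ℝ) : ℝ≥0∞ :=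
  (d : ℝ≥0∞) / ((n : ℝ≥0∞) * ENNReal.ofReal e)

/-- Asymptotic predictive risk of a James–Stein estimator with parameter `λ`. -/
def RjsLim (lam ρ e : ℝ) : ℝ := (lam ^ 2 * e + ρ / (1 - ρ)) / (1 + lam) ^ 2

/-- Limiting optimal James–Stein shrinkage parameter `λ_js = ρ/(η²(1−ρ))`. -/
def lamJSlim (ρ e : ℝ) : ℝ := ρ / (e * (1 - ρ))

/-- Limiting Baranchik shrinkage parameter `λ_bar`. -/
def lamBar (c ρ e : ℝ) : ℝ := c * (1 - ρ) / (e + ρ - c * (1 - ρ))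

/-- Baranchik's estimator. -/
def baranchik {n d : ℕ} (c : ℝ) : Estimator n d :=
  fun y X => (1 - c * sqnorm (y - X *ᵥ olsI y X) / sqnorm (X *ᵥ olsI y X)) • olsI y X

/-- The James–Stein estimator with a real shrinkage parameter (matrix-inverse OLS). -/
def jsR {n d : ℕ} (lam : ℝ) : Estimator n d := fun y X => (1 + lam)⁻¹ • olsI y X

/-- The marginal shrinkage estimator `(1/((1+λ)n)) Σ⁻¹ Xᵀ y`. -/
def margShrink {n d : ℕ} (S : Matrix (Fin d) (Fin d) ℝ) (lam : ℝ) : Estimator n d :=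
  fun y X => (1 + lam)⁻¹ • marg S y X

/-- The marginal shrinkage estimator with parameter `λ ∈ [0,∞]`; equal to `0` at `λ = ∞`. -/
def margShrinkE {n d : ℕ} (S : Matrix (Fin d) (Fin d) ℝ) (lam : ℝ≥0∞) : Estimator n d :=
  fun y X => if lam = ∞ then 0 else margShrink S lam.toReal y X

/-- The adaptive marginal shrinkage estimator with `λ̂_m* = d/(n η̂²) + (d+1)/n`
(equal to `0` when `η̂² = 0`). -/
def adaMargShrink {n d : ℕ} (S : Matrix (Fin d) (Fin d) ℝ) : Estimator n d :=
  fun y X => if hatEta2 y X = 0 then 0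
    else margShrink S ((d : ℝ) / ((n : ℝ) * hatEta2 y X) + ((d : ℝ) + 1) / n) y X

/-- The predictive risk of the marginal regression estimator is
`d/n + η²(d+1)/n`. -/
theorem statement3 (n d : ℕ) (hn : 0 < n) (hd : 0 < d)
    (S : Matrix (Fin d) (Fin d) ℝ) (hS : S.PosDef)
    (β : Fin d → ℝ) (σ2 : ℝ≥0) (hσ : 0 < σ2) :
    risk n S β σ2 (marg S) =
      ENNReal.ofReal ((d : ℝ) / n + snr S β σ2 * ((d : ℝ) + 1) / n) := by
  classical
  have hPS : S.PosSemidef := hS.posSemidef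
  set Q : Matrix (Fin d) (Fin d) ℝ := msqrt S with hQdef
  have hQs : Q = (hPS.1.eigenvectorUnitary : Matrix (Fin d) (Fin d) ℝ) *
      Matrix.diagonal (Real.sqrt ∘ hPS.1.eigenvalues) *
      (star hPS.1.eigenvectorUnitary : Matrix (Fin d) (Fin d) ℝ) := by
    rw [hQdef, msqrt, dif_pos hPS]
  have hQQ : Q * Q = S := by
    rw [hQs]
    conv_rhs => rw [hPS.1.spectral_theorem, Unitary.conjStarAlgAut_apply]
    have hU : (star hPS.1.eigenvectorUnitary : Matrix (Fin d) (Fin d) ℝ) *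
        (hPS.1.eigenvectorUnitary : Matrix (Fin d) (Fin d) ℝ) = 1 := by simp
    have hD : Matrix.diagonal (Real.sqrt ∘ hPS.1.eigenvalues) *
        Matrix.diagonal (Real.sqrt ∘ hPS.1.eigenvalues) =
        Matrix.diagonal (RCLike.ofReal ∘ hPS.1.eigenvalues) := by
      rw [Matrix.diagonal_mul_diagonal]; congr 1; funext i
      simp [Real.mul_self_sqrt (hPS.eigenvalues_nonneg i)]
    calc _ = (hPS.1.eigenvectorUnitary : Matrix (Fin d) (Fin d) ℝ) *
          (Matrix.diagonal (Real.sqrt ∘ hPS.1.eigenvalues) *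
            ((star hPS.1.eigenvectorUnitary : Matrix (Fin d) (Fin d) ℝ) *
              (hPS.1.eigenvectorUnitary : Matrix (Fin d) (Fin d) ℝ)) *
            Matrix.diagonal (Real.sqrt ∘ hPS.1.eigenvalues)) *
          (star hPS.1.eigenvectorUnitary : Matrix (Fin d) (Fin d) ℝ) := by
          simp only [Matrix.mul_assoc]
      _ = _ := by rw [hU, Matrix.mul_one, hD]
  have hQT : Qᵀ = Q := by
    rw [hQs]
    simp [Matrix.transpose_mul, Matrix.star_eq_conjTranspose,
      Matrix.conjTranspose_eq_transpose_of_trivial, Matrix.mul_assoc]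
  have hdetQ : IsUnit Q.det := by
    have h1 : Q.det * Q.det = S.det := by rw [← Matrix.det_mul, hQQ]
    refine isUnit_iff_ne_zero.mpr fun h0 => (ne_of_gt hS.det_pos) ?_
    rw [← h1, h0, mul_zero]
  have hQSQ : Q * S⁻¹ * Q = 1 := by
    rw [← hQQ, Matrix.mul_inv_rev]
    calc Q * (Q⁻¹ * Q⁻¹) * Q = (Q * Q⁻¹) * (Q⁻¹ * Q) := by
          rw [Matrix.mul_assoc, Matrix.mul_assoc, Matrix.mul_assoc]
      _ = 1 := by rw [Matrix.mul_nonsing_inv _ hdetQ, Matrix.nonsing_inv_mul _ hdetQ, one_mul]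
  have hvm : ∀ x : Fin d → ℝ, x ᵥ* Q = Q *ᵥ x := by
    intro x
    conv_lhs => rw [← hQT]
    rw [Matrix.vecMul_transpose]
  set v : Fin d → ℝ := Q *ᵥ β with hv
  have hquad : ∀ u : Fin d → ℝ, u ⬝ᵥ (S *ᵥ u) = (Q *ᵥ u) ⬝ᵥ (Q *ᵥ u) := by
    intro u
    rw [← hQQ, ← Matrix.mulVec_mulVec, Matrix.dotProduct_mulVec, hvm]
  have hkey : ∀ ω : Omega n d,
      (marg S (resp S β ω) (dMat S ω) - β) ⬝ᵥ (S *ᵥ (marg S (resp S β ω) (dMat S ω) - β))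
        = ∑ k, ((n:ℝ)⁻¹ * (∑ i, ω.1 i k * ((∑ j, ω.1 i j * v j) + ω.2 i)) - v k) ^ 2 := by
    intro ω
    set Z : Matrix (Fin n) (Fin d) ℝ := Matrix.of ω.1 with hZ
    have hX : dMat S ω = Z * Q := rfl
    have hXT : (dMat S ω)ᵀ = Q * Zᵀ := by rw [hX, Matrix.transpose_mul, hQT]
    have hQmarg : Q *ᵥ (marg S (resp S β ω) (dMat S ω) - β)
        = (n:ℝ)⁻¹ • (Zᵀ *ᵥ resp S β ω) - v := by
      rw [Matrix.mulVec_sub, marg, Matrix.mulVec_smul, Matrix.mulVec_mulVec, hXT,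
        ← Matrix.mul_assoc, ← Matrix.mul_assoc, hQSQ, Matrix.one_mul, hv]
    have hy : resp S β ω = Z *ᵥ v + ω.2 := by
      rw [resp, hX, ← Matrix.mulVec_mulVec, hv]
    rw [hquad, hQmarg, hy, dotProduct]
    refine Finset.sum_congr rfl fun k _ => ?_
    have hcoord : ((n:ℝ)⁻¹ • (Zᵀ *ᵥ (Z *ᵥ v + ω.2)) - v) k
        = (n:ℝ)⁻¹ * (∑ i, ω.1 i k * ((∑ j, ω.1 i j * v j) + ω.2 i)) - v k := by
      simp only [Pi.sub_apply, Pi.smul_apply, smul_eq_mul, Matrix.mulVec, dotProduct,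
        Matrix.transpose_apply, Pi.add_apply, hZ, Matrix.of_apply]
    rw [hcoord, ← pow_two]
  unfold risk
  have hP : P n d σ2 = Measure.prod
      (Measure.pi fun _ : Fin n => (Measure.pi fun _ : Fin d => gaussianReal 0 (1:ℝ≥0)))
      (Measure.pi fun _ : Fin n => gaussianReal 0 σ2) := rfl
  have hlint : ∫⁻ ω, ENNReal.ofReal
      ((marg S (resp S β ω) (dMat S ω) - β) ⬝ᵥ (S *ᵥ (marg S (resp S β ω) (dMat S ω) - β)))
      ∂(P n d σ2)
      = ENNReal.ofReal (((d:ℝ) * σ2 + ((d:ℝ) + 1) * ∑ j, v j ^ 2) / n) := by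
    rw [lintegral_congr (fun ω => by rw [hkey ω]), hP,
      ← MeasureTheory.ofReal_integral_eq_lintegral_ofReal
        (DickerAux.mainInt σ2 v)
        (Eventually.of_forall fun ω => Finset.sum_nonneg fun k _ => sq_nonneg _),
      DickerAux.mainVal σ2 v hn]
  rw [hlint]
  have hvv : ∑ j, v j ^ 2 = β ⬝ᵥ S *ᵥ β := by
    rw [hquad β, ← hv, dotProduct]
    exact Finset.sum_congr rfl fun j _ => (pow_two _)
  rw [hvv]
  have hσ' : (0:ℝ) < (σ2:ℝ) := hσ
  have hcoe : (σ2 : ℝ≥0∞) = ENNReal.ofReal (σ2:ℝ) := by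
    rw [ENNReal.ofReal_coe_nnreal]
  have hfin : (σ2 : ℝ≥0∞)⁻¹ * ENNReal.ofReal (((d:ℝ) * σ2 + ((d:ℝ) + 1) * (β ⬝ᵥ S *ᵥ β)) / n)
      = ENNReal.ofReal ((((d:ℝ) * σ2 + ((d:ℝ) + 1) * (β ⬝ᵥ S *ᵥ β)) / n) / σ2) := by
    rw [ENNReal.ofReal_div_of_pos hσ', hcoe, ← ENNReal.div_eq_inv_mul]
  rw [hfin]
  congr 1
  rw [snr]
  have hn' : (n:ℝ) ≠ 0 := Nat.cast_ne_zero.mpr hn.ne'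
  field_simp

end Dicker

end
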